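/- Let X₁, X₂, X₃, X₄ be Dedekind complete Banach lattices and A : X₁ → X₂, B : X₃ → X₄ nonzero bounded operators. The multiplication operator L_A R_B : L(X₄,X₁) → L(X₃,X₂), T ↦ ATB, is positive (maps positive operators to positive operators) if and only if A and B are both positive or both negative. -/

import Mathlib

section Helpers

variable {E : Type*} [NormedAddCommGroup E] [Lattice E] [HasSolidNorm E] [IsOrderedAddMonoid E] [NormedSpace ℝ E]

private lemma aux_pow2 : ∀ (k : ℕ) (y : E), 0 ≤ (2 ^ k : ℕ) • y → 0 ≤ y := by
  intro k
  induction k with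
  | zero => intro y h; simpa using h
  | succ k ih =>
    intro y h
    have h2 : 0 ≤ (2 ^ k : ℕ) • (2 • y) := by
      rwa [← mul_smul, ← pow_succ]
    exact nsmul_two_semiclosed (ih _ h2)

private lemma aux_dyadic (n k : ℕ) {x : E} (hx : 0 ≤ x) : 0 ≤ ((n : ℝ) / 2 ^ k) • x := by
  apply aux_pow2 k
  rw [← Nat.cast_smul_eq_nsmul ℝ, smul_smul]
  have h : ((2 ^ k : ℕ) : ℝ) * ((n : ℝ) / 2 ^ k) = (n : ℝ) := by
    push_cast
    field_simp
  rw [h, Nat.cast_smul_eq_nsmul]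
  exact nsmul_nonneg hx n

lemma lat_smul_nonneg {c : ℝ} {x : E} (hc : 0 ≤ c) (hx : 0 ≤ x) : 0 ≤ c • x := by
  set seq : ℕ → ℝ := fun n => (⌊c * 2 ^ n⌋₊ : ℝ) / 2 ^ n with hseq
  have hbound : ∀ n, ‖seq n - c‖ ≤ (2⁻¹ : ℝ) ^ n := by
    intro n
    have h1 : (⌊c * 2 ^ n⌋₊ : ℝ) ≤ c * 2 ^ n :=
      Nat.floor_le (by positivity)
    have h2 : c * 2 ^ n < ⌊c * 2 ^ n⌋₊ + 1 := Nat.lt_floor_add_one _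
    have hp : (0:ℝ) < 2 ^ n := by positivity
    have h3 : ((2⁻¹:ℝ)) ^ n = ((2:ℝ) ^ n)⁻¹ := by rw [inv_pow]
    have hub : seq n ≤ c := by
      rw [hseq]; rw [div_le_iff₀ hp]; linarith
    have hlb : c - (2 ^ n)⁻¹ ≤ seq n := by
      rw [hseq]; rw [le_div_iff₀ hp]
      have hx1 : (c - (2 ^ n)⁻¹) * 2 ^ n = c * 2 ^ n - 1 := by
        field_simp
      rw [hx1]; linarith
    rw [Real.norm_eq_abs, abs_le, h3]
    constructor <;> linarith
  have htend0 : Filter.Tendsto (fun n => seq n - c) Filter.atTop (nhds 0) :=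
    squeeze_zero_norm hbound
      (tendsto_pow_atTop_nhds_zero_of_lt_one (by norm_num) (by norm_num))
  have htend : Filter.Tendsto seq Filter.atTop (nhds c) := by
    have := htend0.add_const c
    simpa using this
  have htends : Filter.Tendsto (fun n => seq n • x) Filter.atTop (nhds (c • x)) :=
    htend.smul_const x
  refine ge_of_tendsto' htends fun n => ?_
  exact aux_dyadic _ _ hx

lemma lat_smul_le {c : ℝ} (hc : 0 ≤ c) {a b : E} (h : a ≤ b) : c • a ≤ c • b := by
  have := lat_smul_nonneg hc (sub_nonneg.2 h)
  rw [smul_sub] at this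
  exact sub_nonneg.1 this

lemma lat_smul_sup {c : ℝ} (hc : 0 < c) (w : E) : (c • w) ⊔ 0 = c • (w ⊔ 0) := by
  have key : ∀ (d : ℝ), 0 < d → ∀ u : E, (d • u) ⊔ 0 ≤ d • (u ⊔ 0) := by
    intro d hd u
    refine sup_le (lat_smul_le hd.le le_sup_left) ?_
    have := lat_smul_nonneg hd.le (le_sup_right : (0:E) ≤ u ⊔ 0)
    exact this
  refine le_antisymm (key c hc w) ?_
  have h2 : (c⁻¹ • (c • w)) ⊔ 0 ≤ c⁻¹ • ((c • w) ⊔ 0) := key c⁻¹ (by positivity) _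
  rw [inv_smul_smul₀ hc.ne'] at h2
  have h3 := lat_smul_le hc.le h2
  rwa [smul_inv_smul₀ hc.ne'] at h3

lemma lat_norm_sup_zero_le (w : E) : ‖w ⊔ 0‖ ≤ ‖w‖ := by
  have h1 : |w ⊔ 0| ≤ |w| := by
    rw [abs_of_nonneg (le_sup_right : (0:E) ≤ w ⊔ 0)]
    exact sup_le (le_abs_self w) (abs_nonneg w)
  calc ‖w ⊔ 0‖ = ‖|w ⊔ 0|‖ := (norm_abs_eq_norm _).symm
    _ ≤ ‖|w|‖ := by
        apply HasSolidNorm.solid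
        rwa [abs_abs, abs_abs]
    _ = ‖w‖ := norm_abs_eq_norm _

/-- If `v` is not nonnegative, there is a positive continuous functional negative at `v`. -/
lemma exists_pos_functional_neg_at {v : E} (hv : ¬ 0 ≤ v) :
    ∃ f : E →L[ℝ] ℝ, (∀ x : E, 0 ≤ x → 0 ≤ f x) ∧ f v < 0 := by
  set u : E := (-v) ⊔ 0 with hu
  have hune : u ≠ 0 := by
    intro h
    apply hv
    have h1 : -v ≤ u := le_sup_left
    rw [h] at h1
    exact neg_nonpos.mp h1
  have hvne : v ≠ 0 := by rintro rfl; exact hv le_rfl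
  have hunorm : 0 < ‖u‖ := norm_pos_iff.2 hune
  set N : E → ℝ := fun w => ‖w ⊔ 0‖ with hN
  have N_hom : ∀ c : ℝ, 0 < c → ∀ w : E, N (c • w) = c * N w := by
    intro c hc w
    rw [hN]
    simp only
    rw [lat_smul_sup hc, norm_smul, Real.norm_eq_abs, abs_of_pos hc]
  have N_add : ∀ w₁ w₂ : E, N (w₁ + w₂) ≤ N w₁ + N w₂ := by
    intro w₁ w₂
    have h1 : (w₁ + w₂) ⊔ 0 ≤ w₁ ⊔ 0 + w₂ ⊔ 0 := by
      refine sup_le (add_le_add le_sup_left le_sup_left) ?_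
      exact add_nonneg le_sup_right le_sup_right
    have h2 : ‖(w₁ + w₂) ⊔ 0‖ ≤ ‖w₁ ⊔ 0 + w₂ ⊔ 0‖ := by
      apply HasSolidNorm.solid
      rw [abs_of_nonneg (le_sup_right : (0:E) ≤ (w₁ + w₂) ⊔ 0),
        abs_of_nonneg (add_nonneg (le_sup_right : (0:E) ≤ w₁ ⊔ 0)
          (le_sup_right : (0:E) ≤ w₂ ⊔ 0))]
      exact h1
    exact h2.trans (norm_add_le _ _)
  set f₀ : E →ₗ.[ℝ] ℝ := LinearPMap.mkSpanSingleton v (-‖u‖) hvne with hf₀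
  have hf₀dom : f₀.domain = Submodule.span ℝ {v} := rfl
  have hf₀le : ∀ z : f₀.domain, f₀ z ≤ N z := by
    rintro ⟨z, hz⟩
    rw [hf₀dom] at hz
    obtain ⟨c, rfl⟩ := Submodule.mem_span_singleton.1 hz
    have happ : f₀ ⟨c • v, hz⟩ = c • (-‖u‖) :=
      LinearPMap.mkSpanSingleton'_apply _ _ _ c _
    rw [happ]
    rcases le_or_gt 0 c with hc | hc
    · have hle : c • (-‖u‖) ≤ 0 := by
        rw [smul_eq_mul]
        exact mul_nonpos_of_nonneg_of_nonpos hc (neg_nonpos.mpr (norm_nonneg u))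
      exact hle.trans (norm_nonneg _)
    · have hcv : c • v = (-c) • (-v) := by rw [neg_smul, smul_neg, neg_neg]
      have hNc : N (c • v) = (-c) * ‖u‖ := by
        rw [hcv, hN]
        simp only
        rw [lat_smul_sup (neg_pos.mpr hc), ← hu, norm_smul, Real.norm_eq_abs,
          abs_of_pos (neg_pos.mpr hc)]
      rw [hNc, smul_eq_mul]
      nlinarith only [norm_nonneg u, hc]
  obtain ⟨g, hg_eq, hg_le⟩ := exists_extension_of_le_sublinear f₀ N N_hom N_add hf₀le
  have hgv : g v = -‖u‖ := by
    have hmem : v ∈ f₀.domain := by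
      rw [hf₀dom]; exact Submodule.mem_span_singleton_self v
    have heq := hg_eq ⟨v, hmem⟩
    rw [heq]
    exact LinearPMap.mkSpanSingleton_apply ℝ ℝ (σ := RingHom.id ℝ) hvne (-‖u‖)
  have hgpos : ∀ x : E, 0 ≤ x → 0 ≤ g x := by
    intro x hx
    have h1 : g (-x) ≤ N (-x) := hg_le (-x)
    have h2 : N (-x) = 0 := by
      rw [hN]
      simp only
      rw [sup_of_le_right (neg_nonpos.2 hx), norm_zero]
    rw [map_neg, h2] at h1
    linarith only [h1]
  have hgbdd : ∀ w : E, ‖g w‖ ≤ 1 * ‖w‖ := by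
    intro w
    rw [one_mul, Real.norm_eq_abs, abs_le]
    constructor
    · have h1 : g (-w) ≤ N (-w) := hg_le (-w)
      have h2 : N (-w) ≤ ‖w‖ := by
        rw [hN]; simpa using (lat_norm_sup_zero_le (-w)).trans (by rw [norm_neg])
      rw [map_neg] at h1
      linarith only [h1, h2]
    · exact (hg_le w).trans (lat_norm_sup_zero_le w)
  refine ⟨g.mkContinuous 1 hgbdd, ?_, ?_⟩
  · intro x hx
    simpa using hgpos x hx
  · show g.mkContinuous 1 hgbdd v < 0
    rw [LinearMap.mkContinuous_apply, hgv]
    exact neg_neg_of_pos hunorm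

/-- If all positive functionals are nonnegative at `v`, then `v ≥ 0`. -/
lemma nonneg_of_all_pos_functionals {v : E}
    (h : ∀ f : E →L[ℝ] ℝ, (∀ x : E, 0 ≤ x → 0 ≤ f x) → 0 ≤ f v) : 0 ≤ v := by
  by_contra hv
  obtain ⟨f, hfpos, hfv⟩ := exists_pos_functional_neg_at hv
  exact absurd (h f hfpos) (not_le.mpr hfv)

lemma exists_pos_functional_pos_at {u : E} (hu : 0 ≤ u) (hune : u ≠ 0) :
    ∃ f : E →L[ℝ] ℝ, (∀ x : E, 0 ≤ x → 0 ≤ f x) ∧ 0 < f u := by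
  have h : ¬ 0 ≤ -u := by
    intro h
    exact hune (le_antisymm (neg_nonneg.mp h) hu)
  obtain ⟨f, hfpos, hfv⟩ := exists_pos_functional_neg_at h
  rw [map_neg] at hfv
  exact ⟨f, hfpos, by linarith only [hfv]⟩

end Helpers

/-- A positive operator between Banach lattices. -/
def IsPosM {E F : Type*} [NormedAddCommGroup E] [Lattice E] [HasSolidNorm E] [IsOrderedAddMonoid E] [NormedSpace ℝ E]
    [NormedAddCommGroup F] [Lattice F] [HasSolidNorm F] [IsOrderedAddMonoid F] [NormedSpace ℝ F] (A : E →L[ℝ] F) : Prop :=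
  ∀ x : E, 0 ≤ x → 0 ≤ A x

/-- Dedekind completeness of a lattice. -/
def DedekindComplete (X : Type*) [Lattice X] : Prop :=
  ∀ s : Set X, s.Nonempty → BddAbove s → ∃ b, IsLUB s b

/-- A nonzero operator does not vanish on the positive cone. -/
lemma exists_nonneg_ne_zero {E F : Type*} [NormedAddCommGroup E] [Lattice E] [HasSolidNorm E] [IsOrderedAddMonoid E] [NormedSpace ℝ E]
    [NormedAddCommGroup F] [Lattice F] [HasSolidNorm F] [IsOrderedAddMonoid F] [NormedSpace ℝ F] {A : E →L[ℝ] F} (hA : A ≠ 0) :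
    ∃ x : E, 0 ≤ x ∧ A x ≠ 0 := by
  by_contra h
  push_neg at h
  apply hA
  ext y
  rw [ContinuousLinearMap.zero_apply, ← posPart_sub_negPart y, map_sub,
    h _ (posPart_nonneg y), h _ (negPart_nonneg y), sub_zero]

/-- The multiplication operator `L_A R_B : T ↦ A T B` is positive iff `A` and `B` are
both positive or both negative. -/
theorem mult_op_positive_iff
    {X₁ X₂ X₃ X₄ : Type*}
    [NormedAddCommGroup X₁] [Lattice X₁] [HasSolidNorm X₁] [IsOrderedAddMonoid X₁] [NormedSpace ℝ X₁] [CompleteSpace X₁]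
    [NormedAddCommGroup X₂] [Lattice X₂] [HasSolidNorm X₂] [IsOrderedAddMonoid X₂] [NormedSpace ℝ X₂] [CompleteSpace X₂]
    [NormedAddCommGroup X₃] [Lattice X₃] [HasSolidNorm X₃] [IsOrderedAddMonoid X₃] [NormedSpace ℝ X₃] [CompleteSpace X₃]
    [NormedAddCommGroup X₄] [Lattice X₄] [HasSolidNorm X₄] [IsOrderedAddMonoid X₄] [NormedSpace ℝ X₄] [CompleteSpace X₄]
    (hDC₁ : DedekindComplete X₁) (hDC₂ : DedekindComplete X₂)
    (hDC₃ : DedekindComplete X₃) (hDC₄ : DedekindComplete X₄)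
    (A : X₁ →L[ℝ] X₂) (B : X₃ →L[ℝ] X₄) (hA : A ≠ 0) (hB : B ≠ 0) :
    (∀ T : X₄ →L[ℝ] X₁, IsPosM T → IsPosM (A.comp (T.comp B))) ↔
      (IsPosM A ∧ IsPosM B) ∨ (IsPosM (-A) ∧ IsPosM (-B)) := by
  constructor
  · intro H
    -- key consequence with rank-one operators
    have key : ∀ (f : X₄ →L[ℝ] ℝ), (∀ y : X₄, 0 ≤ y → 0 ≤ f y) →
        ∀ (x : X₁), 0 ≤ x → ∀ (z : X₃), 0 ≤ z → 0 ≤ f (B z) • A x := by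
      intro f hf x hx z hz
      have hT : IsPosM (f.smulRight x) := by
        intro y hy
        simp only [ContinuousLinearMap.smulRight_apply]
        exact lat_smul_nonneg (hf y hy) hx
      have := H (f.smulRight x) hT z hz
      simpa [ContinuousLinearMap.comp_apply, ContinuousLinearMap.smulRight_apply,
        map_smul] using this
    obtain ⟨z₀, hz₀, hBz₀⟩ := exists_nonneg_ne_zero hB
    by_cases hcase : ∃ (f : X₄ →L[ℝ] ℝ), (∀ y : X₄, 0 ≤ y → 0 ≤ f y) ∧
        ∃ z : X₃, 0 ≤ z ∧ 0 < f (B z)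
    · -- A and B positive
      obtain ⟨f₀, hf₀, z₁, hz₁, hfBz₁⟩ := hcase
      have hApos : IsPosM A := by
        intro x hx
        have h := key f₀ hf₀ x hx z₁ hz₁
        have := lat_smul_le (c := (f₀ (B z₁))⁻¹) (by positivity) h
        rwa [smul_zero, smul_smul, inv_mul_cancel₀ hfBz₁.ne', one_smul] at this
      left
      refine ⟨hApos, ?_⟩
      obtain ⟨x₀, hx₀, hAx₀⟩ := exists_nonneg_ne_zero hA
      obtain ⟨g, hg, hgAx₀⟩ := exists_pos_functional_pos_at (hApos x₀ hx₀) hAx₀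
      intro z hz
      apply nonneg_of_all_pos_functionals
      intro f hf
      have h := key f hf x₀ hx₀ z hz
      have h2 : 0 ≤ g (f (B z) • A x₀) := hg _ h
      rw [map_smul, smul_eq_mul] at h2
      nlinarith
    · -- all positive functionals are ≤ 0 on B z; then -B, -A positive
      push_neg at hcase
      have hBneg : IsPosM (-B) := by
        intro z hz
        rw [ContinuousLinearMap.neg_apply]
        apply nonneg_of_all_pos_functionals
        intro f hf
        rw [map_neg]
        have := hcase f hf z hz
        linarith
      right
      refine ⟨?_, hBneg⟩
      have hBz₀' : (0:X₄) ≤ -(B z₀) := by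
        have := hBneg z₀ hz₀
        rwa [ContinuousLinearMap.neg_apply] at this
      obtain ⟨f₁, hf₁, hf₁B⟩ := exists_pos_functional_pos_at hBz₀' (by simpa using hBz₀)
      have hf₁Bz₀ : f₁ (B z₀) < 0 := by
        rw [map_neg] at hf₁B
        linarith
      intro x hx
      rw [ContinuousLinearMap.neg_apply]
      have h := key f₁ hf₁ x hx z₀ hz₀
      have h2 : f₁ (B z₀) • A x = (-(f₁ (B z₀))) • (-(A x)) := by
        rw [neg_smul, smul_neg, neg_neg]
      rw [h2] at h
      have hpos : (0:ℝ) < -(f₁ (B z₀)) := neg_pos.mpr hf₁Bz₀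
      have := lat_smul_le (c := (-(f₁ (B z₀)))⁻¹) (inv_nonneg.mpr hpos.le) h
      rwa [smul_zero, smul_smul, inv_mul_cancel₀ hpos.ne', one_smul] at this
  · rintro (⟨hApos, hBpos⟩ | ⟨hAneg, hBneg⟩) <;> intro T hT z hz
    · simp only [ContinuousLinearMap.comp_apply]
      exact hApos _ (hT _ (hBpos z hz))
    · simp only [ContinuousLinearMap.comp_apply]
      have hw : (0:X₄) ≤ -(B z) := by
        have := hBneg z hz
        rwa [ContinuousLinearMap.neg_apply] at this
      have hTw : 0 ≤ T (-(B z)) := hT _ hw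
      have h1 : 0 ≤ (-A) (T (-(B z))) := hAneg _ hTw
      rw [ContinuousLinearMap.neg_apply, map_neg, map_neg, neg_neg] at h1
      exact h1
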